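/- Let 𝒞 be an abelian category, w an admissible class of morphisms of 𝒞 such that (𝒞, w) satisfies the factorization axiom, and u an admissible class of morphisms of 𝒞 containing w. Then w_{𝒞^u} = u; that is, a morphism f of 𝒞 lies in u if and only if f is a 𝒞^u-weak equivalence (here 𝒞^u is a w-Serre subcategory of 𝒞, so 𝒞^u-weak equivalences are defined). -/

import Mathlib

open CategoryTheory CategoryTheory.Limits ZeroObject

universe v u

/-- An *admissible class* of morphisms in an abelian category: it contains all
isomorphisms, satisfies the two-out-of-three property, and in any morphism of
short exact sequences, if two of the three vertical morphisms lie in the class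
then so does the third. -/
structure AdmissibleClass {C : Type u} [Category.{v} C] [Abelian C]
    (w : MorphismProperty C) : Prop where
  of_isIso : ∀ {x y : C} (f : x ⟶ y), IsIso f → w f
  comp_mem : ∀ {x y z : C} (f : x ⟶ y) (g : y ⟶ z), w f → w g → w (f ≫ g)
  of_comp_left : ∀ {x y z : C} (f : x ⟶ y) (g : y ⟶ z), w g → w (f ≫ g) → w f
  of_comp_right : ∀ {x y z : C} (f : x ⟶ y) (g : y ⟶ z), w f → w (f ≫ g) → w g
  ses_fst : ∀ {S₁ S₂ : ShortComplex C}, S₁.ShortExact → S₂.ShortExact →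
    ∀ (φ : S₁ ⟶ S₂), w φ.τ₂ → w φ.τ₃ → w φ.τ₁
  ses_snd : ∀ {S₁ S₂ : ShortComplex C}, S₁.ShortExact → S₂.ShortExact →
    ∀ (φ : S₁ ⟶ S₂), w φ.τ₁ → w φ.τ₃ → w φ.τ₂
  ses_trd : ∀ {S₁ S₂ : ShortComplex C}, S₁.ShortExact → S₂.ShortExact →
    ∀ (φ : S₁ ⟶ S₂), w φ.τ₁ → w φ.τ₂ → w φ.τ₃

/-- A *`w`-Serre subcategory* of an abelian category `C`, encoded as the set of
its objects: it is closed under isomorphisms, in any short exact sequence if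
two of the three terms belong to it then so does the third, and it is
`w`-closed (closed under sources and targets of morphisms of `w`, hence under
finite zig-zags of morphisms of `w`). -/
structure IsWSerre {C : Type u} [Category.{v} C] [Abelian C]
    (w : MorphismProperty C) (S : Set C) : Prop where
  iso_closed : ∀ {x y : C}, (x ≅ y) → x ∈ S → y ∈ S
  ses_fst : ∀ {T : ShortComplex C}, T.ShortExact → T.X₂ ∈ S → T.X₃ ∈ S → T.X₁ ∈ S
  ses_snd : ∀ {T : ShortComplex C}, T.ShortExact → T.X₁ ∈ S → T.X₃ ∈ S → T.X₂ ∈ S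
  ses_trd : ∀ {T : ShortComplex C}, T.ShortExact → T.X₁ ∈ S → T.X₂ ∈ S → T.X₃ ∈ S
  w_src : ∀ {x y : C} (f : x ⟶ y), w f → y ∈ S → x ∈ S
  w_tgt : ∀ {x y : C} (f : x ⟶ y), w f → x ∈ S → y ∈ S

/-- The pair `(C, w)` satisfies the *factorization axiom*: every morphism `f`
factors as a monomorphism (cofibration) followed by a morphism of `w`. -/
def HasFactorizations {C : Type u} [Category.{v} C] [Abelian C]
    (w : MorphismProperty C) : Prop :=
  ∀ {x y : C} (f : x ⟶ y),
    ∃ (u : C) (i : x ⟶ u) (p : u ⟶ y), Mono i ∧ w p ∧ i ≫ p = f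

/-- The class `w_S` of *`S`-weak equivalences*: morphisms admitting a
factorization as a monomorphism `i` followed by a morphism of `w`, with
`coker i` in `S`. -/
def SWeq {C : Type u} [Category.{v} C] [Abelian C]
    (w : MorphismProperty C) (S : Set C) : MorphismProperty C :=
  fun x y f =>
    ∃ (u : C) (i : x ⟶ u) (p : u ⟶ y),
      Mono i ∧ w p ∧ i ≫ p = f ∧ cokernel i ∈ S

/-- `C^u`: the full subcategory (set of objects) of those `x` such that the
morphism `0 ⟶ x` lies in `u`. -/
def objectsOf {C : Type u} [Category.{v} C] [Abelian C]
    (u : MorphismProperty C) : Set C :=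
  {x : C | u (0 : (0 : C) ⟶ x)}

section Aux

variable {C : Type u} [Category.{v} C] [Abelian C]

/-- The short complex `x ⟶ x ⟶ 0`. -/
noncomputable def auxS₁ (x : C) : ShortComplex C :=
  ShortComplex.mk (𝟙 x) (0 : x ⟶ (0 : C)) (by simp)

lemma auxS₁_shortExact (x : C) : (auxS₁ x).ShortExact := by
  have hepi : Epi (0 : x ⟶ (0 : C)) :=
    ⟨fun g h _ => (isZero_zero C).eq_of_src g h⟩
  refine ShortComplex.ShortExact.mk' ?_ (by dsimp [auxS₁]; infer_instance) hepi
  apply ShortComplex.exact_of_f_is_kernel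
  exact KernelFork.IsLimit.ofι _ _ (fun s _ => s) (fun s _ => Category.comp_id s)
    (fun s _ m hm => by exact (Category.comp_id m).symm.trans hm)

/-- The short complex `x ⟶ y ⟶ coker i`. -/
noncomputable def auxS₂ {x y : C} (i : x ⟶ y) : ShortComplex C :=
  ShortComplex.mk i (cokernel.π i) (cokernel.condition i)

lemma auxS₂_shortExact {x y : C} (i : x ⟶ y) (hi : Mono i) : (auxS₂ i).ShortExact := by
  refine ShortComplex.ShortExact.mk' ?_ hi (by dsimp [auxS₂]; infer_instance)
  exact ShortComplex.exact_of_g_is_cokernel _ (cokernelIsCokernel i)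

/-- The evident morphism `(x ⟶ x ⟶ 0) ⟶ (x ⟶ y ⟶ coker i)`. -/
noncomputable def auxφ {x y : C} (i : x ⟶ y) : auxS₁ x ⟶ auxS₂ i where
  τ₁ := 𝟙 x
  τ₂ := i
  τ₃ := 0
  comm₁₂ := by simp [auxS₁, auxS₂]
  comm₂₃ := by simp [auxS₁, auxS₂]; exact (zero_comp).symm

end Aux

theorem sWeq_objectsOf {C : Type u} [Category.{v} C] [Abelian C]
    {w u : MorphismProperty C} (hw : AdmissibleClass w)
    (hfac : HasFactorizations w)
    (hu : AdmissibleClass u)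
    (hwu : ∀ {x y : C} (f : x ⟶ y), w f → u f) :
    SWeq w (objectsOf u) = u := by
  funext x y f
  ext
  constructor
  · rintro ⟨v, i, p, hi, hp, hip, hcoker⟩
    have hui : u i := hu.ses_snd (auxS₁_shortExact x) (auxS₂_shortExact i hi)
      (auxφ i) (hu.of_isIso _ (by dsimp [auxφ]; exact IsIso.id x)) hcoker
    rw [← hip]
    exact hu.comp_mem _ _ hui (hwu p hp)
  · intro hf
    obtain ⟨v, i, p, hi, hp, hip⟩ := hfac f
    refine ⟨v, i, p, hi, hp, hip, ?_⟩
    have hui : u i := hu.of_comp_left i p (hwu p hp) (hip ▸ hf)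
    exact hu.ses_trd (auxS₁_shortExact x) (auxS₂_shortExact i hi)
      (auxφ i) (hu.of_isIso _ (by dsimp [auxφ]; exact IsIso.id x)) hui
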